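/- Let R be a ring, f : Y → X a homomorphism of left R-modules, and F an additive covariant functor from left R-modules to abelian groups equipped with a componentwise exact presentation Hom(X,-) → Hom(Y,-) → F → 0, where the first map is composition with f. Then Nat(F, Hom(R,-)) is isomorphic, as an abelian group, to ker f. (For finitely presented functors, the new defect is isomorphic to Auslander's defect.) -/

import Mathlib

open CategoryTheory Opposite

universe u

/-- The forgetful functor `Hom(R,-)`. -/
def forgetfulFunctor (R : Type u) [Ring R] : ModuleCat.{u} R ⥤ AddCommGrpCat.{u} :=
  preadditiveCoyoneda.obj (op (ModuleCat.of R R))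

/-- Evaluation at `1 : R` of an element of `Hom(R,M)`. -/
def evOne (R : Type u) [Ring R] (M : ModuleCat.{u} R)
    (ℓ : (forgetfulFunctor R).obj M) : M :=
  (show ModuleCat.of R R ⟶ M from ℓ).hom (1 : R)

lemma evOne_add (R : Type u) [Ring R] (M : ModuleCat.{u} R)
    (ℓ ℓ' : (forgetfulFunctor R).obj M) :
    evOne R M (ℓ + ℓ') = evOne R M ℓ + evOne R M ℓ' := rfl

lemma evOne_map (R : Type u) [Ring R] {M N : ModuleCat.{u} R} (h : M ⟶ N)
    (ℓ : (forgetfulFunctor R).obj M) :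
    evOne R N ((forgetfulFunctor R).map h ℓ) = h (evOne R M ℓ) := rfl

lemma evOne_inj (R : Type u) [Ring R] (M : ModuleCat.{u} R)
    (ℓ ℓ' : (forgetfulFunctor R).obj M) (h : evOne R M ℓ = evOne R M ℓ') : ℓ = ℓ' :=
  show (ℓ : ModuleCat.of R R ⟶ M) = ℓ' from ModuleCat.hom_ext (LinearMap.ext_ring h)

/-- The element `m : M` packaged as an element of `Hom(R,M)`. -/
def spanOne (R : Type u) [Ring R] (M : ModuleCat.{u} R) (m : M) :
    (forgetfulFunctor R).obj M :=
  ModuleCat.ofHom (LinearMap.toSpanSingleton R M m)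

lemma evOne_spanOne (R : Type u) [Ring R] (M : ModuleCat.{u} R) (m : M) :
    evOne R M (spanOne R M m) = m := one_smul R m

lemma spanOne_add (R : Type u) [Ring R] (M : ModuleCat.{u} R) (m m' : M) :
    spanOne R M (m + m') = spanOne R M m + spanOne R M m' :=
  evOne_inj R M _ _ (by
    rw [evOne_add, evOne_spanOne, evOne_spanOne, evOne_spanOne])

lemma spanOne_zero (R : Type u) [Ring R] (M : ModuleCat.{u} R) :
    spanOne R M 0 = 0 :=
  evOne_inj R M _ _ (by rw [evOne_spanOne]; rfl)

/-- if the additive functor `F` has a componentwise exact presentation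
`Hom(X,-) → Hom(Y,-) → F → 0` with first map given by composition with `f : Y → X`,
then the defect `Nat(F, Hom(R,-))` is isomorphic, as an abelian group, to `ker f`. -/
theorem statement6 (R : Type u) [Ring R] (X Y : ModuleCat.{u} R) (f : Y ⟶ X)
    (F : ModuleCat.{u} R ⥤ AddCommGrpCat.{u}) [F.Additive]
    (π : preadditiveCoyoneda.obj (op Y) ⟶ F)
    (hsurj : ∀ M : ModuleCat.{u} R, Function.Surjective (π.app M))
    (hexact : ∀ (M : ModuleCat.{u} R) (g : Y ⟶ M),
      π.app M g = 0 ↔ ∃ h : X ⟶ M, f ≫ h = g) :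
    Nonempty ((F ⟶ forgetfulFunctor R) ≃+ LinearMap.ker f.hom) := by
  classical
  have hπnat : ∀ (M N : ModuleCat.{u} R) (h : M ⟶ N) (g : Y ⟶ M),
      F.map h (π.app M g) = π.app N (g ≫ h) := by
    intro M N h g
    have := ConcreteCategory.congr_hom (π.naturality h) g
    exact this.symm
  have hfe : F.map f (π.app Y (𝟙 Y)) = 0 := by
    rw [hπnat]
    exact (hexact X (𝟙 Y ≫ f)).2 ⟨𝟙 X, by simp⟩
  have hαnat : ∀ (α : F ⟶ forgetfulFunctor R) (M N : ModuleCat.{u} R) (h : M ⟶ N)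
      (u : F.obj M), (forgetfulFunctor R).map h (α.app M u) = α.app N (F.map h u) := by
    intro α M N h u
    have := ConcreteCategory.congr_hom (α.naturality h) u
    simp only [CategoryTheory.comp_apply] at this
    exact this.symm
  have hmem : ∀ α : F ⟶ forgetfulFunctor R,
      evOne R Y (α.app Y (π.app Y (𝟙 Y))) ∈ LinearMap.ker f.hom := by
    intro α
    have h1 := hαnat α Y X f (π.app Y (𝟙 Y))
    rw [hfe, map_zero] at h1
    rw [LinearMap.mem_ker, ← evOne_map R f, h1]
    rfl
  let Φ : (F ⟶ forgetfulFunctor R) →+ LinearMap.ker f.hom :=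
    { toFun := fun α => ⟨evOne R Y (α.app Y (π.app Y (𝟙 Y))), hmem α⟩
      map_zero' := rfl
      map_add' := fun α β => rfl }
  have hΦinj : Function.Injective Φ := by
    intro α β hab
    have h0 : α.app Y (π.app Y (𝟙 Y)) = β.app Y (π.app Y (𝟙 Y)) :=
      evOne_inj R Y _ _ (congrArg Subtype.val hab)
    ext M u
    obtain ⟨g', hg⟩ := hsurj M u
    set g : Y ⟶ M := g' with hg'
    have hu : u = F.map g (π.app Y (𝟙 Y)) := by
      rw [hπnat, Category.id_comp]; exact hg.symm
    rw [hu, ← hαnat α Y M g, ← hαnat β Y M g, h0]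
  have hΦsurj : Function.Surjective Φ := by
    rintro ⟨y, hy⟩
    rw [LinearMap.mem_ker] at hy
    have key : ∀ (M : ModuleCat.{u} R) (g g' : Y ⟶ M), π.app M g = π.app M g' →
        g y = g' y := by
      intro M g g' hgg
      have hz : π.app M (g - g') = 0 := (map_sub (π.app M).hom g g').trans (sub_eq_zero.2 hgg)
      obtain ⟨h, hh⟩ := (hexact M (g - g')).1 hz
      have h2 : h (f y) = g y - g' y := by
        have := LinearMap.congr_fun (congrArg ModuleCat.Hom.hom hh) y
        simpa using this
      rw [hy, map_zero] at h2
      exact sub_eq_zero.1 h2.symm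
    let ev : ∀ M : ModuleCat.{u} R, F.obj M → M := fun M u =>
      (show Y ⟶ M from Classical.choose (hsurj M u)) y
    have hev : ∀ (M : ModuleCat.{u} R) (g : Y ⟶ M), ev M (π.app M g) = g y :=
      fun M g => key M _ g (Classical.choose_spec (hsurj M _))
    have hev_nat : ∀ (M N : ModuleCat.{u} R) (h : M ⟶ N) (u : F.obj M),
        ev N (F.map h u) = h (ev M u) := by
      intro M N h u
      obtain ⟨g', rfl⟩ := hsurj M u
      set g : Y ⟶ M := g' with hg'
      show ev N (F.map h (π.app M g)) = h (ev M (π.app M g))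
      rw [hπnat, hev, hev]
      simp
    have hev_add : ∀ (M : ModuleCat.{u} R) (u v : F.obj M),
        ev M (u + v) = ev M u + ev M v := by
      intro M u v
      obtain ⟨g1', rfl⟩ := hsurj M u
      obtain ⟨g2', rfl⟩ := hsurj M v
      set g1 : Y ⟶ M := g1' with h1'
      set g2 : Y ⟶ M := g2' with h2'
      show ev M (π.app M g1 + π.app M g2) = ev M (π.app M g1) + ev M (π.app M g2)
      have e3 := hev M (g1 + g2)
      rw [show π.app M (g1 + g2) = π.app M g1 + π.app M g2 from map_add (π.app M).hom g1 g2] at e3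
      rw [e3, hev, hev]
      rfl
    have hev_zero : ∀ M : ModuleCat.{u} R, ev M (0 : F.obj M) = 0 := by
      intro M
      have : (0 : F.obj M) = π.app M (0 : Y ⟶ M) := (map_zero _).symm
      rw [this, hev]
      rfl
    let α : F ⟶ forgetfulFunctor R :=
      { app := fun M => AddCommGrpCat.ofHom
          { toFun := fun u => spanOne R M (ev M u)
            map_zero' := by
              show spanOne R M (ev M 0) = 0
              rw [hev_zero]; exact spanOne_zero R M
            map_add' := fun u v => by
              show spanOne R M (ev M (u + v)) = spanOne R M (ev M u) + spanOne R M (ev M v)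
              rw [hev_add]; exact spanOne_add R M _ _ }
        naturality := by
          intro M N h
          ext u
          show spanOne R N (ev N (F.map h u)) = (forgetfulFunctor R).map h (spanOne R M (ev M u))
          rw [hev_nat]
          refine (evOne_inj R N _ _ ?_).symm
          rw [evOne_map, evOne_spanOne, evOne_spanOne] }
    refine ⟨α, ?_⟩
    apply Subtype.ext
    show evOne R Y (spanOne R Y (ev Y (π.app Y (𝟙 Y)))) = y
    rw [evOne_spanOne, hev]
    simp
  exact ⟨AddEquiv.ofBijective Φ ⟨hΦinj, hΦsurj⟩⟩
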